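/- The number of d-dimensional partitions π with corner-hook volume |π|_{ch} = n equals MacMahon's number m_d(n), defined by Σ_n m_d(n) q^n = ∏_{k≥1} (1 − q^k)^{−binom(k+d−2,d−1)}. -/

import Mathlib

open scoped BigOperators

noncomputable section

namespace HDP

variable {d : ℕ}

/-- The step `i → i + e_ℓ` in `ℤ₊^d` (coordinates are 0-based). -/
def step (i : Fin d → ℕ) (ℓ : Fin d) : Fin d → ℕ := Function.update i ℓ (i ℓ + 1)

/-- `p` is a directed lattice path of length `n` starting at `i`:
each step goes from a point to the point plus a standard basis vector. -/
def IsPathFrom (i : Fin d → ℕ) (n : ℕ) (p : ℕ → Fin d → ℕ) : Prop :=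
  p 0 = i ∧ ∀ t < n, ∃ ℓ, p (t + 1) = step (p t) ℓ

/-- The last passage time `G(i)`: the maximum, over directed lattice paths starting
at `i`, of the sum of the entries of `A` along the path. -/
def lpt (A : (Fin d → ℕ) → ℕ) (i : Fin d → ℕ) : ℕ :=
  sSup {s | ∃ n p, IsPathFrom i n p ∧ s = ∑ t ∈ Finset.range (n + 1), A (p t)}

/-- A `d`-dimensional partition: a finitely supported function `ℤ₊^d → ℕ`
which is weakly decreasing in each coordinate. -/
def IsPartition (π : (Fin d → ℕ) → ℕ) : Prop :=
  (Function.support π).Finite ∧ ∀ i j : Fin d → ℕ, (∀ k, i k ≤ j k) → π j ≤ π i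

/-- The set of corners of a `d`-dimensional partition `π` : points `(i, k)` of the
diagram of `π` (i.e. `1 ≤ k ≤ π i`) such that `(i + e ℓ, k)` is not in the diagram
for every `ℓ ∈ [d]`. -/
def Cor (π : (Fin d → ℕ) → ℕ) : Set ((Fin d → ℕ) × ℕ) :=
  {p | 1 ≤ p.2 ∧ p.2 ≤ π p.1 ∧ ∀ ℓ, π (step p.1 ℓ) < p.2}

/-- The number of corners of `π`. -/
def cor (π : (Fin d → ℕ) → ℕ) : ℕ := Nat.card (Cor π)

/-- The corner-hook volume of `π`: the sum over corners `(i, k)` of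
`i₁ + ⋯ + i_d - d + 1` (in 1-based coordinates; with our 0-based
coordinates this cohook length is `(∑ j, i j) + 1`). -/
def chvol (π : (Fin d → ℕ) → ℕ) : ℕ := ∑ᶠ p ∈ Cor π, ((∑ j, p.1 j) + 1)

/-- A set is down-closed for the componentwise order. -/
def DownClosed (ρ : Set (Fin d → ℕ)) : Prop :=
  ∀ i j : Fin d → ℕ, (∀ k, i k ≤ j k) → j ∈ ρ → i ∈ ρ

/-- The set of top corners of a shape `ρ`. -/
def Cr (ρ : Set (Fin d → ℕ)) : Set (Fin d → ℕ) := {i ∈ ρ | ∀ ℓ, step i ℓ ∉ ρ}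

end HDP

open HDP

/-- The product topology on formal power series (coefficientwise convergence). -/
instance powerSeriesTopology : TopologicalSpace (PowerSeries ℚ) :=
  inferInstanceAs (TopologicalSpace ((Unit →₀ ℕ) → ℚ))
namespace MacMahonAux

open HDP Finset

variable {d : ℕ}

/-- The sum of coordinates of a point. -/
def w (i : Fin d → ℕ) : ℕ := ∑ j, i j

lemma le_step (i : Fin d → ℕ) (ℓ k : Fin d) : i k ≤ step i ℓ k := by
  unfold step
  rcases eq_or_ne k ℓ with h | h
  · subst h; rw [Function.update_self]; omega
  · rw [Function.update_of_ne h]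

lemma w_step (i : Fin d → ℕ) (ℓ : Fin d) : w (step i ℓ) = w i + 1 := by
  unfold w step
  rw [Finset.sum_update_of_mem (Finset.mem_univ ℓ),
    Finset.sum_eq_add_sum_sdiff_singleton_of_mem (Finset.mem_univ ℓ) i]
  omega

/-- The maximum of `π` over the `d` successors of `i`. -/
def Mx (π : (Fin d → ℕ) → ℕ) (i : Fin d → ℕ) : ℕ :=
  Finset.univ.sup fun ℓ => π (step i ℓ)

/-- The "derivative" of a partition: `π i` minus the max of the successors. -/
def Dm (π : (Fin d → ℕ) → ℕ) (i : Fin d → ℕ) : ℕ := π i - Mx π i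

lemma Mx_le {π : (Fin d → ℕ) → ℕ} (hπ : IsPartition π) (i : Fin d → ℕ) :
    Mx π i ≤ π i :=
  Finset.sup_le fun ℓ _ => hπ.2 i (step i ℓ) (le_step i ℓ)

lemma partition_rec {π : (Fin d → ℕ) → ℕ} (hπ : IsPartition π) (i : Fin d → ℕ) :
    π i = Dm π i + Mx π i :=
  (Nat.sub_add_cancel (Mx_le hπ i)).symm

lemma Dm_le {π : (Fin d → ℕ) → ℕ} (i : Fin d → ℕ) : Dm π i ≤ π i := Nat.sub_le _ _

lemma exists_bound {π : (Fin d → ℕ) → ℕ} (hπ : IsPartition π) :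
    ∃ M, ∀ i, M ≤ w i → π i = 0 := by
  refine ⟨hπ.1.toFinset.sup w + 1, fun i hi => ?_⟩
  by_contra h
  have : i ∈ hπ.1.toFinset := by simpa [Function.mem_support] using h
  have := Finset.le_sup (f := w) this
  omega

lemma partition_ext {π π' : (Fin d → ℕ) → ℕ} (hπ : IsPartition π)
    (hπ' : IsPartition π') (h : Dm π = Dm π') : π = π' := by
  obtain ⟨M, hM⟩ := exists_bound hπ
  obtain ⟨M', hM'⟩ := exists_bound hπ'
  set N := max M M' with hN
  have key : ∀ n i, N ≤ w i + n → π i = π' i := by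
    intro n
    induction n with
    | zero =>
      intro i hi
      rw [hM i (by omega), hM' i (by omega)]
    | succ n ih =>
      intro i hi
      rcases le_or_gt N (w i) with h0 | h0
      · rw [hM i (by omega), hM' i (by omega)]
      · have hMx : Mx π i = Mx π' i := by
          unfold Mx
          refine Finset.sup_congr rfl fun ℓ _ => ?_
          exact ih (step i ℓ) (by rw [w_step]; omega)
        rw [partition_rec hπ i, partition_rec hπ' i, h, hMx]
  funext i
  exact key N i (by omega)

end MacMahonAux
namespace MacMahonAux

open HDP Finset

variable {d : ℕ}

/-- The set of path-sums from `i`. -/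
def PS (A : (Fin d → ℕ) → ℕ) (i : Fin d → ℕ) : Set ℕ :=
  {s | ∃ n p, IsPathFrom i n p ∧ s = ∑ t ∈ Finset.range (n + 1), A (p t)}

lemma lpt_eq_sSup (A : (Fin d → ℕ) → ℕ) (i : Fin d → ℕ) : lpt A i = sSup (PS A i) := rfl

lemma PS_nonempty (A : (Fin d → ℕ) → ℕ) (i : Fin d → ℕ) : (A i) ∈ PS A i := by
  refine ⟨0, fun _ => i, ⟨rfl, fun t ht => absurd ht (by omega)⟩, ?_⟩
  simp

lemma path_w {i : Fin d → ℕ} {n : ℕ} {p : ℕ → Fin d → ℕ} (hp : IsPathFrom i n p) :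
    ∀ t ≤ n, w (p t) = w i + t := by
  intro t
  induction t with
  | zero => intro _; rw [hp.1]; omega
  | succ t ih =>
    intro ht
    obtain ⟨ℓ, hℓ⟩ := hp.2 t (by omega)
    rw [hℓ, w_step, ih (by omega)]; omega

lemma path_ge {i : Fin d → ℕ} {n : ℕ} {p : ℕ → Fin d → ℕ} (hp : IsPathFrom i n p) :
    ∀ t ≤ n, ∀ k, i k ≤ p t k := by
  intro t
  induction t with
  | zero => intro _ k; rw [hp.1]
  | succ t ih =>
    intro ht k
    obtain ⟨ℓ, hℓ⟩ := hp.2 t (by omega)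
    rw [hℓ]
    exact le_trans (ih (by omega) k) (le_step _ _ _)

lemma PS_bddAbove {A : (Fin d → ℕ) → ℕ} (hA : (Function.support A).Finite)
    (i : Fin d → ℕ) : BddAbove (PS A i) := by
  refine ⟨∑ j ∈ hA.toFinset, A j, fun s hs => ?_⟩
  obtain ⟨n, p, hp, rfl⟩ := hs
  have hinj : Set.InjOn p ↑((Finset.range (n+1)).filter fun t => A (p t) ≠ 0) := by
    intro t ht t' ht' h
    simp only [Finset.coe_filter, Set.mem_setOf_eq, Finset.mem_range] at ht ht'
    have h1 := path_w hp t (by omega)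
    have h2 := path_w hp t' (by omega)
    rw [h] at h1
    omega
  calc ∑ t ∈ Finset.range (n + 1), A (p t)
      = ∑ t ∈ (Finset.range (n+1)).filter fun t => A (p t) ≠ 0, A (p t) :=
        (Finset.sum_filter_ne_zero _).symm
    _ = ∑ j ∈ ((Finset.range (n+1)).filter fun t => A (p t) ≠ 0).image p, A j := by
        rw [Finset.sum_image (fun t ht t' ht' => hinj ht ht')]
    _ ≤ ∑ j ∈ hA.toFinset, A j := by
        refine Finset.sum_le_sum_of_subset fun j hj => ?_
        obtain ⟨t, ht, rfl⟩ := Finset.mem_image.mp hj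
        simp only [Finset.mem_filter] at ht
        simpa using ht.2

lemma lpt_rec (hd : 0 < d) {A : (Fin d → ℕ) → ℕ} (hA : (Function.support A).Finite)
    (i : Fin d → ℕ) : lpt A i = A i + Mx (lpt A) i := by
  apply le_antisymm
  · refine csSup_le ⟨A i, PS_nonempty A i⟩ fun s hs => ?_
    obtain ⟨n, p, hp, rfl⟩ := hs
    cases n with
    | zero => simp [hp.1]
    | succ m =>
      obtain ⟨ℓ, hℓ⟩ := hp.2 0 (by omega)
      have hq : IsPathFrom (step i ℓ) m (fun t => p (t + 1)) := by
        refine ⟨?_, fun t ht => hp.2 (t+1) (by omega)⟩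
        show p (0 + 1) = step i ℓ
        rw [hℓ, hp.1]
      have hmem : (∑ t ∈ Finset.range (m + 1), A (p (t+1))) ∈ PS A (step i ℓ) :=
        ⟨m, fun t => p (t+1), hq, rfl⟩
      have h1 : (∑ t ∈ Finset.range (m + 1), A (p (t+1))) ≤ lpt A (step i ℓ) :=
        le_csSup (PS_bddAbove hA _) hmem
      have h2 : lpt A (step i ℓ) ≤ Mx (lpt A) i :=
        Finset.le_sup (f := fun ℓ => lpt A (step i ℓ)) (Finset.mem_univ ℓ)
      rw [Finset.sum_range_succ' (fun t => A (p t)), hp.1]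
      omega
  · haveI : Nonempty (Fin d) := Fin.pos_iff_nonempty.mp hd
    obtain ⟨ℓ₀, _, hℓ₀⟩ := Finset.exists_mem_eq_sup Finset.univ
      Finset.univ_nonempty (fun ℓ => lpt A (step i ℓ))
    rw [Mx, hℓ₀]
    have hmem : lpt A (step i ℓ₀) ∈ PS A (step i ℓ₀) :=
      Nat.sSup_mem ⟨A _, PS_nonempty _ _⟩ (PS_bddAbove hA _)
    obtain ⟨n, p, hp, hsum⟩ := hmem
    set p' : ℕ → Fin d → ℕ := fun t => match t with
      | 0 => i
      | t + 1 => p t with hp'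
    have hpath : IsPathFrom i (n + 1) p' := by
      constructor
      · rfl
      · intro t ht
        match t with
        | 0 => exact ⟨ℓ₀, by simp only [hp']; rw [hp.1]⟩
        | u + 1 =>
          obtain ⟨ℓ, hℓ⟩ := hp.2 u (by omega)
          exact ⟨ℓ, by simp only [hp']; rw [hℓ]⟩
    have hmem' : (∑ t ∈ Finset.range (n + 2), A (p' t)) ∈ PS A i :=
      ⟨n + 1, p', hpath, rfl⟩
    have : ∑ t ∈ Finset.range (n + 2), A (p' t)
        = A i + ∑ t ∈ Finset.range (n + 1), A (p t) := by
      rw [Finset.sum_range_succ' (fun t => A (p' t))]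
      simp only [hp']
      omega
    rw [hsum]
    calc A i + ∑ t ∈ Finset.range (n + 1), A (p t)
        = ∑ t ∈ Finset.range (n + 2), A (p' t) := this.symm
      _ ≤ lpt A i := le_csSup (PS_bddAbove hA i) hmem'

lemma lpt_zero {A : (Fin d → ℕ) → ℕ}
    {i : Fin d → ℕ} (h : ∀ j, (∀ k, i k ≤ j k) → A j = 0) : lpt A i = 0 := by
  rw [lpt_eq_sSup]
  refine (congrArg sSup ?_).trans (csSup_singleton 0)
  refine Set.eq_singleton_iff_unique_mem.mpr ⟨?_, fun s hs => ?_⟩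
  · have := PS_nonempty A i
    rwa [h i (fun k => le_refl _)] at this
  · obtain ⟨n, p, hp, rfl⟩ := hs
    refine Finset.sum_eq_zero fun t ht => ?_
    exact h (p t) (path_ge hp t (by simpa using Nat.lt_succ_iff.mp (Finset.mem_range.mp ht)))

end MacMahonAux
namespace MacMahonAux

open HDP Finset

variable {d : ℕ}

lemma lpt_step_le (hd : 0 < d) {A : (Fin d → ℕ) → ℕ}
    (hA : (Function.support A).Finite) (i : Fin d → ℕ) (ℓ : Fin d) :
    lpt A (step i ℓ) ≤ lpt A i := by
  have h2 : lpt A (step i ℓ) ≤ Mx (lpt A) i :=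
    Finset.le_sup (f := fun ℓ => lpt A (step i ℓ)) (Finset.mem_univ ℓ)
  rw [lpt_rec hd hA i]
  omega

lemma lpt_antitone (hd : 0 < d) {A : (Fin d → ℕ) → ℕ}
    (hA : (Function.support A).Finite) {i j : Fin d → ℕ} (hij : ∀ k, i k ≤ j k) :
    lpt A j ≤ lpt A i := by
  have key : ∀ n (i j : Fin d → ℕ), (∀ k, i k ≤ j k) → w j ≤ w i + n →
      lpt A j ≤ lpt A i := by
    intro n
    induction n with
    | zero =>
      intro i j hij hw
      have hle : ∑ k, i k ≤ ∑ k, j k := Finset.sum_le_sum fun k _ => hij k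
      have hw' : ∑ k, j k ≤ ∑ k, i k := by unfold w at hw; omega
      have : ∀ k ∈ Finset.univ, i k = j k :=
        (Finset.sum_eq_sum_iff_of_le fun k _ => hij k).mp (le_antisymm hle hw')
      have : i = j := funext fun k => this k (Finset.mem_univ k)
      rw [this]
    | succ n ih =>
      intro i j hij hw
      rcases eq_or_ne i j with rfl | hne
      · exact le_refl _
      · have : ∃ k, i k < j k := by
          by_contra hc
          push_neg at hc
          exact hne (funext fun k => le_antisymm (hij k) (hc k))
        obtain ⟨k, hk⟩ := this
        have h1 : ∀ m, step i k m ≤ j m := by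
          intro m
          unfold step
          rcases eq_or_ne m k with rfl | hmk
          · rw [Function.update_self]; omega
          · rw [Function.update_of_ne hmk]; exact hij m
        have h2 := ih (step i k) j h1 (by rw [w_step]; omega)
        exact le_trans h2 (lpt_step_le hd hA i k)
  exact key (w j) i j hij (Nat.le_add_left _ _)

lemma lpt_support_finite {A : (Fin d → ℕ) → ℕ}
    (hA : (Function.support A).Finite) :
    (Function.support (lpt A)).Finite := by
  set N := hA.toFinset.sup w with hN
  have hsub : Function.support (lpt A) ⊆ Set.pi Set.univ fun _ : Fin d => Set.Iic N := by
    intro i hi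
    have : ¬ ∀ j, (∀ k, i k ≤ j k) → A j = 0 := fun h => hi (lpt_zero h)
    push_neg at this
    obtain ⟨j, hij, hAj⟩ := this
    intro k _
    have hjN : w j ≤ N := Finset.le_sup (f := w) (hA.mem_toFinset.mpr hAj)
    have : j k ≤ w j := Finset.single_le_sum (fun m _ => Nat.zero_le (j m)) (Finset.mem_univ k)
    exact le_trans (hij k) (le_trans this hjN)
  exact Set.Finite.subset (Set.Finite.pi fun _ => Set.finite_Iic N) hsub

lemma lpt_isPartition (hd : 0 < d) {A : (Fin d → ℕ) → ℕ}
    (hA : (Function.support A).Finite) : IsPartition (lpt A) :=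
  ⟨lpt_support_finite hA, fun i j hij => lpt_antitone hd hA hij⟩

lemma Dm_lpt (hd : 0 < d) {A : (Fin d → ℕ) → ℕ}
    (hA : (Function.support A).Finite) : Dm (lpt A) = A := by
  funext i
  rw [Dm, lpt_rec hd hA i]
  omega

lemma Dm_support_finite {π : (Fin d → ℕ) → ℕ} (hπ : IsPartition π) :
    (Function.support (Dm π)).Finite := by
  refine Set.Finite.subset hπ.1 fun i hi => ?_
  simp only [Function.mem_support] at hi ⊢
  have := Dm_le (π := π) i
  omega

lemma lpt_Dm (hd : 0 < d) {π : (Fin d → ℕ) → ℕ} (hπ : IsPartition π) :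
    lpt (Dm π) = π := by
  refine partition_ext (lpt_isPartition hd (Dm_support_finite hπ)) hπ ?_
  rw [Dm_lpt hd (Dm_support_finite hπ)]

end MacMahonAux
namespace MacMahonAux

open HDP Finset

variable {d : ℕ}

/-- The weight of a filling `A`. -/
def wt (A : (Fin d → ℕ) → ℕ) : ℕ := ∑ᶠ i, A i * (w i + 1)

lemma Cor_eq (hd : 0 < d) {π : (Fin d → ℕ) → ℕ} :
    Cor π = {p : (Fin d → ℕ) × ℕ | Mx π p.1 < p.2 ∧ p.2 ≤ π p.1} := by
  ext ⟨i, k⟩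
  simp only [Cor, Set.mem_setOf_eq]
  constructor
  · rintro ⟨h1, h2, h3⟩
    refine ⟨?_, h2⟩
    haveI : Nonempty (Fin d) := Fin.pos_iff_nonempty.mp hd
    exact Finset.sup_lt_iff (show (⊥ : ℕ) < k from h1) |>.mpr fun ℓ _ => h3 ℓ
  · rintro ⟨h1, h2⟩
    refine ⟨by omega, h2, fun ℓ => ?_⟩
    have : π (step i ℓ) ≤ Mx π i :=
      Finset.le_sup (f := fun ℓ => π (step i ℓ)) (Finset.mem_univ ℓ)
    omega

lemma chvol_eq (hd : 0 < d) {π : (Fin d → ℕ) → ℕ} (hπ : IsPartition π) :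
    chvol π = wt (Dm π) := by
  classical
  set S := hπ.1.toFinset with hS
  set T : Finset ((Fin d → ℕ) × ℕ) := S.biUnion fun i =>
    (Finset.Ioc (Mx π i) (π i)).map ⟨fun k => (i, k), fun a b h => by simpa using congrArg Prod.snd h⟩ with hT
  have hmemT : ∀ p : (Fin d → ℕ) × ℕ, p ∈ T ↔ Mx π p.1 < p.2 ∧ p.2 ≤ π p.1 := by
    rintro ⟨i, k⟩
    simp only [hT, Finset.mem_biUnion, Finset.mem_map, Finset.mem_Ioc,
      Function.Embedding.coeFn_mk]
    constructor
    · rintro ⟨i', _, k', hk', h⟩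
      obtain ⟨h5, h6⟩ := Prod.ext_iff.mp h
      subst h5; subst h6
      exact hk'
    · rintro ⟨h1, h2⟩
      refine ⟨i, ?_, k, ⟨h1, h2⟩, rfl⟩
      rw [hS, Set.Finite.mem_toFinset, Function.mem_support]
      omega
  have hcor : Cor π = ↑T := by
    rw [Cor_eq hd]
    ext p
    simp only [Finset.mem_coe, hmemT, Set.mem_setOf_eq]
  have h1 : chvol π = ∑ p ∈ T, ((∑ j, p.1 j) + 1) := by
    rw [chvol, hcor, finsum_mem_coe_finset]
  rw [h1]
  have hdisj : ∀ i ∈ S, ∀ i' ∈ S, i ≠ i' →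
      Disjoint ((Finset.Ioc (Mx π i) (π i)).map ⟨fun k => (i, k), fun a b h => by simpa using congrArg Prod.snd h⟩)
        ((Finset.Ioc (Mx π i') (π i')).map ⟨fun k => (i', k), fun a b h => by simpa using congrArg Prod.snd h⟩) := by
    intro i _ i' _ hne
    rw [Finset.disjoint_left]
    rintro ⟨a, b⟩ h h'
    simp only [Finset.mem_map, Function.Embedding.coeFn_mk] at h h'
    obtain ⟨k, _, hk⟩ := h
    obtain ⟨k', _, hk'⟩ := h'
    exact hne (((Prod.ext_iff.mp hk).1).trans ((Prod.ext_iff.mp hk').1).symm)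
  rw [hT, Finset.sum_biUnion hdisj]
  have h2 : ∀ i ∈ S, (∑ p ∈ (Finset.Ioc (Mx π i) (π i)).map ⟨fun k => (i, k), fun a b h => by simpa using congrArg Prod.snd h⟩, ((∑ j, p.1 j) + 1))
      = Dm π i * (w i + 1) := by
    intro i _
    rw [Finset.sum_map]
    show ∑ _k ∈ Finset.Ioc (Mx π i) (π i), ((∑ j, i j) + 1) = _
    rw [Finset.sum_const, Nat.card_Ioc, smul_eq_mul, Dm, w]
  rw [Finset.sum_congr rfl h2]
  rw [wt, finsum_eq_sum_of_support_subset]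
  intro i hi
  have hπi : π i ≠ 0 := by
    intro h0
    simp only [Function.mem_support] at hi
    apply hi
    have h4 := Dm_le (π := π) i
    have hD : Dm π i = 0 := by omega
    rw [hD, zero_mul]
  exact Finset.mem_coe.mpr (hπ.1.mem_toFinset.mpr (Function.mem_support.mpr hπi))

end MacMahonAux
namespace MacMahonAux

open HDP Finset

variable {d : ℕ}

lemma card_partitions_eq (hd : 0 < d) (n : ℕ) :
    Nat.card {π : (Fin d → ℕ) → ℕ // IsPartition π ∧ chvol π = n}
      = Nat.card {A : (Fin d → ℕ) → ℕ // (Function.support A).Finite ∧ wt A = n} := by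
  refine Nat.card_congr
    ⟨fun x => ⟨Dm x.1, Dm_support_finite x.2.1, by
        rw [← chvol_eq hd x.2.1]; exact x.2.2⟩,
     fun y => ⟨lpt y.1, lpt_isPartition hd y.2.1, by
        rw [chvol_eq hd (lpt_isPartition hd y.2.1), Dm_lpt hd y.2.1]; exact y.2.2⟩,
     fun x => Subtype.ext (lpt_Dm hd x.2.1),
     fun y => Subtype.ext (Dm_lpt hd y.2.1)⟩

lemma wt_mem_le {A : (Fin d → ℕ) → ℕ} (hA : (Function.support A).Finite)
    {i : Fin d → ℕ} (hi : A i ≠ 0) : w i + 1 ≤ wt A := by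
  have hfin : (Function.support fun i => A i * (w i + 1)).Finite := by
    refine hA.subset fun j hj => ?_
    simp only [Function.mem_support] at hj ⊢
    intro h; apply hj; rw [h, zero_mul]
  have h1 : A i * (w i + 1) ≤ wt A :=
    single_le_finsum i hfin fun j => Nat.zero_le _
  have h2 : 1 ≤ A i := Nat.one_le_iff_ne_zero.mpr hi
  calc w i + 1 = 1 * (w i + 1) := (one_mul _).symm
    _ ≤ A i * (w i + 1) := Nat.mul_le_mul_right _ h2
    _ ≤ wt A := h1

section Counting

variable (d) in
/-- The tuples whose weight lies in `s`. -/
def Ts (s : Finset ℕ) : Finset (Fin d → ℕ) :=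
  s.biUnion fun k => Finset.Nat.antidiagonalTuple d k

lemma mem_Ts {s : Finset ℕ} {i : Fin d → ℕ} : i ∈ Ts d s ↔ w i ∈ s := by
  simp only [Ts, Finset.mem_biUnion, Finset.Nat.mem_antidiagonalTuple]
  constructor
  · rintro ⟨k, hk, hik⟩
    rwa [show w i = k from hik]
  · intro h
    exact ⟨w i, h, rfl⟩

variable (d) in
/-- The relevant finset of finitely supported divisible functions. -/
def Fdvd (s : Finset ℕ) (n : ℕ) : Finset ((Fin d → ℕ) →₀ ℕ) :=
  (Finset.finsuppAntidiag (Ts d s) n).filter fun l => ∀ i ∈ Ts d s, (w i + 1) ∣ l i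

lemma card_Fdvd {s : Finset ℕ} {n : ℕ} (hs : Finset.range n ⊆ s) :
    (Fdvd d s n).card
      = Nat.card {A : (Fin d → ℕ) → ℕ // (Function.support A).Finite ∧ wt A = n} := by
  classical
  rw [← Nat.card_eq_finsetCard]
  refine Nat.card_congr ?_
  have hl0 : ∀ l ∈ Fdvd d s n, ∀ i, i ∉ Ts d s → l i = 0 := by
    intro l hl i hi
    rw [Fdvd, Finset.mem_filter, Finset.mem_finsuppAntidiag] at hl
    by_contra h
    exact hi (hl.1.2 (Finsupp.mem_support_iff.mpr h))
  have hps : ∀ l ∈ Fdvd d s n, ∀ i, (l i / (w i + 1)) * (w i + 1) = l i := by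
    intro l hl i
    rcases em (i ∈ Ts d s) with hi | hi
    · rw [Fdvd, Finset.mem_filter] at hl
      exact Nat.div_mul_cancel (hl.2 i hi)
    · rw [hl0 l hl i hi]
      simp
  have hwt : ∀ l ∈ Fdvd d s n, wt (fun i => l i / (w i + 1)) = n := by
    intro l hl
    have hmem := hl
    rw [Fdvd, Finset.mem_filter, Finset.mem_finsuppAntidiag] at hmem
    have : wt (fun i => l i / (w i + 1)) = ∑ᶠ i, l i := by
      rw [wt]
      congr 1
      funext i
      exact hps l hl i
    rw [this, finsum_eq_sum_of_support_subset _ (by rw [Finsupp.fun_support_eq])]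
    rw [Finset.sum_subset hmem.1.2 (fun x _ hx => Finsupp.notMem_support_iff.mp hx)]
    exact hmem.1.1
  have hsupfin : ∀ A : (Fin d → ℕ) → ℕ, (Function.support A).Finite →
      (Function.support fun i => A i * (w i + 1)).Finite := by
    intro A hA
    refine hA.subset fun j hj => ?_
    simp only [Function.mem_support] at hj ⊢
    intro h; apply hj; rw [h, zero_mul]
  have hsupTs : ∀ A : (Fin d → ℕ) → ℕ, (Function.support A).Finite → wt A = n →
      ∀ i, A i ≠ 0 → i ∈ Ts d s := by
    intro A hA hw i hi
    have := wt_mem_le hA hi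
    rw [hw] at this
    exact mem_Ts.mpr (hs (Finset.mem_range.mpr (by omega)))
  refine ⟨fun x => ⟨fun i => x.1 i / (w i + 1), ?_, hwt x.1 x.2⟩, fun y => ⟨?_, ?_⟩, ?_, ?_⟩
  · -- support finite
    refine (x.1.support.finite_toSet).subset fun i hi => ?_
    simp only [Function.mem_support] at hi
    simp only [Finset.coe_sort_coe, Finset.mem_coe, Finsupp.mem_support_iff]
    intro h
    apply hi
    rw [h]
    simp
  · -- the finsupp
    exact Finsupp.ofSupportFinite (fun i => y.1 i * (w i + 1)) (hsupfin y.1 y.2.1)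
  · -- membership in Fdvd
    have hcoe : ∀ i, (Finsupp.ofSupportFinite (fun i => y.1 i * (w i + 1)) (hsupfin y.1 y.2.1)) i
        = y.1 i * (w i + 1) := fun i => rfl
    rw [Fdvd, Finset.mem_filter, Finset.mem_finsuppAntidiag]
    have hsub : (Finsupp.ofSupportFinite (fun i => y.1 i * (w i + 1)) (hsupfin y.1 y.2.1)).support
        ⊆ Ts d s := by
      intro i hi
      rw [Finsupp.mem_support_iff, hcoe] at hi
      have : y.1 i ≠ 0 := by intro h; apply hi; rw [h, zero_mul]
      exact hsupTs y.1 y.2.1 y.2.2 i this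
    refine ⟨⟨?_, hsub⟩, fun i _ => by rw [hcoe]; exact dvd_mul_left _ _⟩
    have : ∑ i ∈ Ts d s, (Finsupp.ofSupportFinite (fun i => y.1 i * (w i + 1)) (hsupfin y.1 y.2.1)) i
        = ∑ᶠ i, y.1 i * (w i + 1) := by
      rw [finsum_eq_sum_of_support_subset _ (s := Ts d s) ?_]
      · exact Finset.sum_congr rfl fun i _ => (hcoe i).symm
      · intro i hi
        simp only [Function.mem_support] at hi
        have : y.1 i ≠ 0 := by intro h; apply hi; rw [h, zero_mul]
        exact Finset.mem_coe.mpr (hsupTs y.1 y.2.1 y.2.2 i this)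
    rw [this, ← wt, y.2.2]
  · -- left inverse
    intro x
    apply Subtype.ext
    apply Finsupp.ext
    intro i
    exact hps x.1 x.2 i
  · -- right inverse
    intro y
    apply Subtype.ext
    funext i
    show (y.1 i * (w i + 1)) / (w i + 1) = y.1 i
    exact Nat.mul_div_cancel _ (by omega)

end Counting

end MacMahonAux
namespace MacMahonAux

open HDP Finset PowerSeries

variable {d : ℕ}

lemma geom_inv (m : ℕ) :
    ((1 - (X : PowerSeries ℚ) ^ (m + 1))⁻¹)
      = PowerSeries.mk (fun n => if (m + 1) ∣ n then 1 else 0) := by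
  rw [PowerSeries.inv_eq_iff_mul_eq_one (by simp)]
  ext n
  rw [mul_sub, mul_one, map_sub, PowerSeries.coeff_mk, PowerSeries.coeff_mul_X_pow',
    PowerSeries.coeff_one]
  cases n with
  | zero => simp
  | succ n =>
    by_cases hle : m + 1 ≤ n + 1
    · rw [if_pos hle, PowerSeries.coeff_mk]
      by_cases hdvd : (m + 1) ∣ (n + 1)
      · rw [if_pos hdvd, if_pos (Nat.dvd_sub hdvd dvd_rfl), if_neg (Nat.succ_ne_zero n),
          sub_self]
      · have h2 : ¬ (m + 1) ∣ (n + 1 - (m + 1)) := by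
          intro hc
          apply hdvd
          have := Nat.dvd_add hc (dvd_refl (m + 1))
          rwa [Nat.sub_add_cancel hle] at this
        rw [if_neg hdvd, if_neg h2, if_neg (Nat.succ_ne_zero n), sub_self]
    · have h3 : ¬ (m + 1) ∣ (n + 1) := fun hc => hle (Nat.le_of_dvd (Nat.succ_pos n) hc)
      rw [if_neg h3, if_neg hle, if_neg (Nat.succ_ne_zero n), sub_zero]

lemma coeff_geom (m n : ℕ) :
    PowerSeries.coeff (R := ℚ) n ((1 - (X : PowerSeries ℚ) ^ (m + 1))⁻¹)
      = if (m + 1) ∣ n then 1 else 0 := by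
  rw [geom_inv, PowerSeries.coeff_mk]

lemma choose_flip (d k : ℕ) (hd : 0 < d) :
    (d + k - 1).choose k = (k + d - 1).choose (d - 1) := by
  have hk : k ≤ d + k - 1 := by omega
  have h5 : d + k - 1 - k = d - 1 := by omega
  rw [← Nat.choose_symm hk, h5, show d + k - 1 = k + d - 1 by omega]

lemma card_antidiagonalTuple (hd : 0 < d) (k : ℕ) :
    (Finset.Nat.antidiagonalTuple d k).card = (k + d - 1).choose (d - 1) := by
  have h1 : (Finset.Nat.antidiagonalTuple d k).card
      = Nat.card {x // x ∈ Finset.Nat.antidiagonalTuple d k} :=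
    (Nat.card_eq_finsetCard _).symm
  have h2 : Nat.card {x // x ∈ Finset.Nat.antidiagonalTuple d k}
      = Nat.card {P : Fin d → ℕ // ∑ i, P i = k} :=
    Nat.card_congr (Equiv.subtypeEquivRight fun x => Finset.Nat.mem_antidiagonalTuple)
  have h3 : Nat.card {P : Fin d → ℕ // ∑ i, P i = k} = Nat.card (Sym (Fin d) k) :=
    (Nat.card_congr (Sym.equivNatSumOfFintype (Fin d) k)).symm
  have h4 : Nat.card (Sym (Fin d) k) = Fintype.card (Sym (Fin d) k) :=
    Nat.card_eq_fintype_card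
  rw [h1, h2, h3, h4, Sym.card_sym_eq_multichoose, Nat.multichoose_eq, Fintype.card_fin,
    choose_flip d k hd]

/-- The factors of MacMahon's product. -/
def fct (d k : ℕ) : PowerSeries ℚ :=
  ((1 - (X : PowerSeries ℚ) ^ (k + 1))⁻¹) ^ ((k + d - 1).choose (d - 1))

lemma fct_eq_prod (hd : 0 < d) (k : ℕ) :
    fct d k = ∏ i ∈ Finset.Nat.antidiagonalTuple d k,
      (1 - (X : PowerSeries ℚ) ^ (w i + 1))⁻¹ := by
  rw [fct, ← card_antidiagonalTuple hd k, ← Finset.prod_const]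
  refine (Finset.prod_congr rfl fun i hi => ?_).symm
  rw [show w i = k from Finset.Nat.mem_antidiagonalTuple.mp hi]

lemma prod_fct (hd : 0 < d) (s : Finset ℕ) :
    ∏ k ∈ s, fct d k
      = ∏ i ∈ Ts d s, (1 - (X : PowerSeries ℚ) ^ (w i + 1))⁻¹ := by
  rw [Ts, Finset.prod_biUnion]
  · exact Finset.prod_congr rfl fun k _ => fct_eq_prod hd k
  · intro k _ k' _ hne
    rw [Function.onFun, Finset.disjoint_left]
    intro i hi hi'
    exact hne ((Finset.Nat.mem_antidiagonalTuple.mp hi).symm.trans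
      (Finset.Nat.mem_antidiagonalTuple.mp hi'))

lemma coeff_prod_fct (hd : 0 < d) {n : ℕ} {s : Finset ℕ} (hs : Finset.range n ⊆ s) :
    PowerSeries.coeff (R := ℚ) n (∏ k ∈ s, fct d k)
      = (Nat.card {A : (Fin d → ℕ) → ℕ //
          (Function.support A).Finite ∧ wt A = n} : ℚ) := by
  rw [prod_fct hd, PowerSeries.coeff_prod]
  have h1 : ∀ l ∈ Finset.finsuppAntidiag (Ts d s) n,
      (∏ i ∈ Ts d s, PowerSeries.coeff (R := ℚ) (l i)
          ((1 - (X : PowerSeries ℚ) ^ (w i + 1))⁻¹))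
        = if ∀ i ∈ Ts d s, (w i + 1) ∣ l i then 1 else 0 := by
    intro l _
    rw [← Finset.prod_boole]
    exact Finset.prod_congr rfl fun i _ => coeff_geom _ _
  rw [Finset.sum_congr rfl h1, Finset.sum_boole, ← card_Fdvd hs, Fdvd]

end MacMahonAux
namespace MacMahonAux

open HDP Finset PowerSeries

variable {d : ℕ}

lemma apply_eq_coeff (f : PowerSeries ℚ) (σ : Unit →₀ ℕ) :
    f σ = PowerSeries.coeff (R := ℚ) (σ ()) f := by
  have h : σ = Finsupp.single () (σ ()) := Finsupp.unique_single σ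
  conv_lhs => rw [h]
  rfl

lemma hasProd (hd : 0 < d) :
    HasProd (fun k => ((1 - (X : PowerSeries ℚ) ^ (k + 1))⁻¹)
        ^ Nat.choose (k + d - 1) (d - 1))
      (PowerSeries.mk fun n => (Nat.card {A : (Fin d → ℕ) → ℕ //
          (Function.support A).Finite ∧ wt A = n} : ℚ)) := by
  have hfct : (fun k => ((1 - (X : PowerSeries ℚ) ^ (k + 1))⁻¹)
      ^ Nat.choose (k + d - 1) (d - 1)) = fct d := rfl
  rw [hfct, HasProd]
  set F := (PowerSeries.mk fun n => (Nat.card {A : (Fin d → ℕ) → ℕ //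
      (Function.support A).Finite ∧ wt A = n} : ℚ)) with hF
  refine tendsto_pi_nhds.mpr fun σ => ?_
  have hev : ∀ᶠ s : Finset ℕ in Filter.atTop,
      (∏ k ∈ s, fct d k) σ = F σ := by
    filter_upwards [Filter.eventually_ge_atTop (Finset.range (σ ()))] with s hs
    rw [apply_eq_coeff (∏ k ∈ s, fct d k) σ, apply_eq_coeff F σ,
      coeff_prod_fct hd (Finset.le_iff_subset.mp hs), hF, PowerSeries.coeff_mk]
  exact Filter.Tendsto.congr' (Filter.EventuallyEq.symm hev) tendsto_const_nhds

end MacMahonAux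
open PowerSeries in
/-- MacMahon's number `m_d(n)`, defined by
`Σ_n m_d(n) qⁿ = ∏_{k ≥ 1} (1 - q^k)^{-C(k+d-2, d-1)}`, counts the `d`-dimensional
partitions of corner-hook volume `n`.  (The product index `k : ℕ` stands for
`k + 1 ≥ 1`, so the binomial is written `C(k+d-1, d-1)`.) -/
theorem macMahon_numbers_count_cornerHook_volume {d : ℕ} (hd : 0 < d)
    (m : ℕ → ℕ)
    (hm : PowerSeries.mk (fun n => (m n : ℚ))
      = ∏' k : ℕ, ((1 - (PowerSeries.X : PowerSeries ℚ) ^ (k + 1))⁻¹)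
          ^ Nat.choose (k + d - 1) (d - 1)) (n : ℕ) :
    Nat.card {π : (Fin d → ℕ) → ℕ // IsPartition π ∧ chvol π = n} = m n := by
  haveI : T2Space (PowerSeries ℚ) := inferInstanceAs (T2Space ((Unit →₀ ℕ) → ℚ))
  have hP := MacMahonAux.hasProd (d := d) hd
  rw [hP.tprod_eq] at hm
  have hcoeff := congrArg (PowerSeries.coeff (R := ℚ) n) hm
  rw [PowerSeries.coeff_mk, PowerSeries.coeff_mk] at hcoeff
  have hmn : m n = Nat.card {A : (Fin d → ℕ) → ℕ //
      (Function.support A).Finite ∧ MacMahonAux.wt A = n} := Nat.cast_injective hcoeff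
  rw [MacMahonAux.card_partitions_eq hd n, hmn]
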